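/- arXiv:1806.06119 — 4 statements merged into one kernel-verified Lean document; each statement's English description precedes it below -/
import Mathlib

section
/- Let (X, Σ, c, c_f) be a generalized control system satisfying (C1) and (C2), and let (γ, σ) be a generalized admissible trajectory starting from x defined on a totally ordered set I with minimum a and maximum b (i.e., γ(a) = x, c(x, γ(t), σ(t)) < +∞ for all t ∈ I, and for all t₁ ≤ t₂ in I there exists σ_{t₁→t₂} ∈ Σ with c(x, γ(t₂), σ(t₂)) ≥ c(x, γ(t₁), σ(t₁)) + c(γ(t₁), γ(t₂), σ_{t₁→t₂})). Then the map h : I → [0,+∞] defined by h(t) := c(x, γ(t), σ(t)) + V(γ(t)) is monotone increasing. -/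
open ENNReal

/-- Along a generalized admissible trajectory, `t ↦ c(x,γ(t),σ(t)) + V(γ(t))` is
monotone increasing. -/
theorem h_monotone {X S : Type*} [Nonempty X] [Nonempty S]
    {I : Type*} [LinearOrder I]
    (c : X → X → S → ℝ≥0∞) (cf : X → ℝ≥0∞)
    (C1 : ∀ x y z : X, ∀ σ₁ σ₂ : S, ∃ σ' : S, c x z σ' ≤ c x y σ₁ + c y z σ₂)
    (C2 : ∀ x z : X, ∀ σ : S, ∃ (y' : X) (σ₁' σ₂' : S),
      c x y' σ₁' + c y' z σ₂' ≤ c x z σ)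
    (V : X → ℝ≥0∞)
    (hV : ∀ x, V x = ⨅ (y : X) (σ : S), c x y σ + cf y)
    (a b : I) (ha : ∀ t, a ≤ t) (hb : ∀ t, t ≤ b)
    (x : X) (γ : I → X) (σ : I → S)
    (hstart : γ a = x)
    (hfin : ∀ t, c x (γ t) (σ t) ≠ ⊤)
    (hadm : ∀ t₁ t₂ : I, t₁ ≤ t₂ → ∃ s : S,
      c x (γ t₁) (σ t₁) + c (γ t₁) (γ t₂) s ≤ c x (γ t₂) (σ t₂)) :
    Monotone (fun t : I => c x (γ t) (σ t) + V (γ t)) := by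
  intro t₁ t₂ hle
  obtain ⟨s, hs⟩ := hadm t₁ t₂ hle
  have key : V (γ t₁) ≤ c (γ t₁) (γ t₂) s + V (γ t₂) := by
    rw [hV (γ t₂), hV (γ t₁)]
    rw [ENNReal.add_iInf]
    refine le_iInf fun y => ?_
    rw [ENNReal.add_iInf]
    refine le_iInf fun σ₂ => ?_
    obtain ⟨σ', hσ'⟩ := C1 (γ t₁) (γ t₂) y s σ₂
    calc (⨅ (y : X) (σ : S), c (γ t₁) y σ + cf y) ≤ c (γ t₁) y σ' + cf y :=
          iInf₂_le (f := fun y σ => c (γ t₁) y σ + cf y) y σ'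
      _ ≤ (c (γ t₁) (γ t₂) s + c (γ t₂) y σ₂) + cf y := add_le_add hσ' le_rfl
      _ = c (γ t₁) (γ t₂) s + (c (γ t₂) y σ₂ + cf y) := by ring
  calc c x (γ t₁) (σ t₁) + V (γ t₁)
      ≤ c x (γ t₁) (σ t₁) + (c (γ t₁) (γ t₂) s + V (γ t₂)) := add_le_add le_rfl key
    _ = (c x (γ t₁) (σ t₁) + c (γ t₁) (γ t₂) s) + V (γ t₂) := by ring
    _ ≤ c x (γ t₂) (σ t₂) + V (γ t₂) := add_le_add hs le_rfl
end

section
/- Let (X, Σ, c, c_f) be a generalized control system satisfying (C1) and (C2), and let (γ, σ) be an optimal generalized admissible trajectory on I = [a,b] starting from x (i.e., V(γ(a)) = c(γ(a), γ(t), σ(t)) + V(γ(t)) for all t ∈ I). Then for all t ≤ s in I, any σ_{t→s} ∈ Σ satisfying the admissibility inequality c(x, γ(s), σ(s)) ≥ c(x, γ(t), σ(t)) + c(γ(t), γ(s), σ_{t→s}) is an optimal transition from γ(t) to γ(s), i.e., V(γ(t)) = c(γ(t), γ(s), σ_{t→s}) + V(γ(s)). -/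
open ENNReal

/-- Along an optimal trajectory, any admissible intermediate transition is itself
an optimal transition. -/
theorem optimal_transitions {X S : Type*} [Nonempty X] [Nonempty S]
    {I : Type*} [LinearOrder I]
    (c : X → X → S → ℝ≥0∞) (cf : X → ℝ≥0∞)
    (C1 : ∀ x y z : X, ∀ σ₁ σ₂ : S, ∃ σ' : S, c x z σ' ≤ c x y σ₁ + c y z σ₂)
    (C2 : ∀ x z : X, ∀ σ : S, ∃ (y' : X) (σ₁' σ₂' : S),
      c x y' σ₁' + c y' z σ₂' ≤ c x z σ)
    (V : X → ℝ≥0∞)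
    (hV : ∀ x, V x = ⨅ (y : X) (σ : S), c x y σ + cf y)
    (a b : I) (ha : ∀ t, a ≤ t) (hb : ∀ t, t ≤ b)
    (x : X) (γ : I → X) (σ : I → S)
    (hstart : γ a = x)
    (hfin : ∀ t, c x (γ t) (σ t) ≠ ⊤)
    (hadm : ∀ t₁ t₂ : I, t₁ ≤ t₂ → ∃ s : S,
      c x (γ t₁) (σ t₁) + c (γ t₁) (γ t₂) s ≤ c x (γ t₂) (σ t₂))
    (hopt : ∀ t : I, V (γ a) = c (γ a) (γ t) (σ t) + V (γ t)) :
    ∀ t s : I, t ≤ s → ∀ σts : S,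
      c x (γ t) (σ t) + c (γ t) (γ s) σts ≤ c x (γ s) (σ s) →
      V (γ t) = c (γ t) (γ s) σts + V (γ s) := by
  -- Dynamic programming inequality: V p ≤ c p q σ₀ + V q
  have key : ∀ p q : X, ∀ σ₀ : S, V p ≤ c p q σ₀ + V q := by
    intro p q σ₀
    rw [hV p, hV q]
    rw [ENNReal.add_iInf]
    refine le_iInf fun z => ?_
    rw [ENNReal.add_iInf]
    refine le_iInf fun σ₂ => ?_
    obtain ⟨σ', hσ'⟩ := C1 p q z σ₀ σ₂
    calc ⨅ (y : X) (τ : S), c p y τ + cf y ≤ c p z σ' + cf z := (iInf_le _ z).trans (iInf_le _ σ')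
    _ ≤ (c p q σ₀ + c q z σ₂) + cf z := add_le_add hσ' le_rfl
    _ = c p q σ₀ + (c q z σ₂ + cf z) := add_assoc _ _ _
  intro t s hts σts hσ
  have h1 := hopt t
  have h2 := hopt s
  rw [hstart] at h1 h2
  have heq : c x (γ t) (σ t) + V (γ t) = c x (γ s) (σ s) + V (γ s) := h1.symm.trans h2
  refine le_antisymm (key _ _ _) ?_
  have hle : c x (γ t) (σ t) + (c (γ t) (γ s) σts + V (γ s)) ≤ c x (γ t) (σ t) + V (γ t) := by
    calc c x (γ t) (σ t) + (c (γ t) (γ s) σts + V (γ s))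
        = (c x (γ t) (σ t) + c (γ t) (γ s) σts) + V (γ s) := (add_assoc _ _ _).symm
      _ ≤ c x (γ s) (σ s) + V (γ s) := add_le_add hσ le_rfl
      _ = c x (γ t) (σ t) + V (γ t) := heq.symm
  exact (ENNReal.add_le_add_iff_left (hfin t)).mp hle
end

section
/- Let (X, Σ, c, c_f) be a generalized control system satisfying (C1) and (C2). Let (γ, σ) be a generalized admissible trajectory on I = [a,b] with c(γ(a), γ(a), σ(a)) = 0, finite values of c along the trajectory, and suppose inf_{σ'∈Σ} c(γ(b), γ(b), σ') = 0 and V(γ(a)) = c(γ(a), γ(b), σ(b)) + c_f(γ(b)) < +∞. Then (γ, σ) is an optimal trajectory: V(γ(a)) = c(γ(a), γ(t), σ(t)) + V(γ(t)) for all t ∈ I. -/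
open ENNReal

/-- If the endpoint realizes the infimum defining `V(γ(a))` and the stay-cost at the
endpoint is infimally zero, then the trajectory is optimal. -/
theorem endpoint_realizes_inf_optimal {X S : Type*} [Nonempty X] [Nonempty S]
    {I : Type*} [LinearOrder I]
    (c : X → X → S → ℝ≥0∞) (cf : X → ℝ≥0∞)
    (C1 : ∀ x y z : X, ∀ σ₁ σ₂ : S, ∃ σ' : S, c x z σ' ≤ c x y σ₁ + c y z σ₂)
    (C2 : ∀ x z : X, ∀ σ : S, ∃ (y' : X) (σ₁' σ₂' : S),
      c x y' σ₁' + c y' z σ₂' ≤ c x z σ)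
    (V : X → ℝ≥0∞)
    (hV : ∀ x, V x = ⨅ (y : X) (σ : S), c x y σ + cf y)
    (a b : I) (ha : ∀ t, a ≤ t) (hb : ∀ t, t ≤ b)
    (γ : I → X) (σ : I → S)
    (hfin : ∀ t, c (γ a) (γ t) (σ t) ≠ ⊤)
    (hadm : ∀ t₁ t₂ : I, t₁ ≤ t₂ → ∃ s : S,
      c (γ a) (γ t₁) (σ t₁) + c (γ t₁) (γ t₂) s ≤ c (γ a) (γ t₂) (σ t₂))
    (hzeroa : c (γ a) (γ a) (σ a) = 0)
    (hzerob : ⨅ σ' : S, c (γ b) (γ b) σ' = 0)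
    (hrealize : V (γ a) = c (γ a) (γ b) (σ b) + cf (γ b))
    (hfinV : V (γ a) ≠ ⊤) :
    ∀ t : I, V (γ a) = c (γ a) (γ t) (σ t) + V (γ t) := by
  intro t
  apply le_antisymm
  · rw [hV (γ a), hV (γ t), ENNReal.add_iInf]
    refine le_iInf fun y => ?_
    rw [ENNReal.add_iInf]
    refine le_iInf fun s => ?_
    obtain ⟨σ', h⟩ := C1 (γ a) (γ t) y (σ t) s
    refine (iInf₂_le y σ').trans ?_
    rw [← add_assoc]
    exact add_le_add_left h _
  · obtain ⟨s, hs⟩ := hadm t b (hb t)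
    calc c (γ a) (γ t) (σ t) + V (γ t)
        ≤ c (γ a) (γ t) (σ t) + (c (γ t) (γ b) s + cf (γ b)) := by
          exact add_le_add_right ((hV (γ t)) ▸ iInf₂_le (f := fun y σ => c (γ t) y σ + cf y) (γ b) s) _
      _ ≤ c (γ a) (γ b) (σ b) + cf (γ b) := by
          rw [← add_assoc]; exact add_le_add_left hs _
      _ = V (γ a) := hrealize.symm
end

section
/- Let Ψ : ℝ^d × ℝ^d → [0,+∞] be lower semicontinuous with Ψ(x,v) = sup_h [a_h(x) + ⟨v, b_h(x)⟩] for countable families of continuous functions a_h : ℝ^d → ℝ, b_h : ℝ^d → ℝ^d. Suppose μ_k ⇀ μ narrowly in 𝒫(ℝ^d) and v_k ∈ L¹_{μ_k}(ℝ^d;ℝ^d) are such that the vector measures v_k μ_k ⇀ w μ weakly-* for some w ∈ L¹_μ. If a_h, b_h have compact support, then ∫ Ψ(x, w(x)) dμ(x) ≤ liminf_k ∫ Ψ(x, v_k(x)) dμ_k(x). -/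
open ENNReal MeasureTheory Filter

section Aux

lemma aux_one_sub_sum_le_prod (s : Finset ℕ) (f : ℕ → ℝ)
    (h0 : ∀ j, 0 ≤ f j) (h1 : ∀ j, f j ≤ 1) :
    1 - ∑ j ∈ s, f j ≤ ∏ j ∈ s, (1 - f j) := by
  classical
  induction s using Finset.induction_on with
  | empty => simp
  | insert i s hx ih =>
    rw [Finset.sum_insert hx, Finset.prod_insert hx]
    have hprod0 : 0 ≤ ∏ j ∈ s, (1 - f j) :=
      Finset.prod_nonneg fun j _ => by linarith [h1 j]
    have hprod1 : ∏ j ∈ s, (1 - f j) ≤ 1 :=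
      Finset.prod_le_one (fun j _ => by linarith [h1 j]) (fun j _ => by linarith [h0 j])
    nlinarith [h0 i, h1 i]

lemma aux_sum_mul_prod (g : ℕ → ℝ) (n : ℕ) :
    ∑ h ∈ Finset.range n, g h * ∏ j ∈ Finset.range h, (1 - g j)
      = 1 - ∏ j ∈ Finset.range n, (1 - g j) := by
  induction n with
  | zero => simp
  | succ n ih => rw [Finset.sum_range_succ, Finset.prod_range_succ, ih]; ring

lemma aux_hcs_sum {X E : Type*} [TopologicalSpace X] [AddCommMonoid E]
    (s : Finset ℕ) (f : ℕ → X → E) (h : ∀ i ∈ s, HasCompactSupport (f i)) :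
    HasCompactSupport (fun x => ∑ i ∈ s, f i x) := by
  classical
  induction s using Finset.induction_on with
  | empty => simp only [Finset.sum_empty]; exact HasCompactSupport.zero
  | insert i s hx ih =>
    simp only [Finset.sum_insert hx]
    exact (h i (Finset.mem_insert_self i s)).add (ih fun j hj => h j (Finset.mem_insert_of_mem hj))

end Aux

/-- Lower semicontinuity of the effort functional along narrow convergence of
measures and weak-* convergence of the associated vector measures. -/
theorem effort_functional_lsc {d : ℕ}
    (Ψ : EuclideanSpace ℝ (Fin d) → EuclideanSpace ℝ (Fin d) → ℝ≥0∞)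
    (hlsc : LowerSemicontinuous
      (fun q : EuclideanSpace ℝ (Fin d) × EuclideanSpace ℝ (Fin d) => Ψ q.1 q.2))
    (a : ℕ → EuclideanSpace ℝ (Fin d) → ℝ)
    (b : ℕ → EuclideanSpace ℝ (Fin d) → EuclideanSpace ℝ (Fin d))
    (hacont : ∀ h, Continuous (a h)) (hbcont : ∀ h, Continuous (b h))
    (hasupp : ∀ h, HasCompactSupport (a h)) (hbsupp : ∀ h, HasCompactSupport (b h))
    (hΨ : ∀ x v, Ψ x v = ⨆ h : ℕ,
      ENNReal.ofReal (a h x + (inner ℝ (v) (b h x) : ℝ)))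
    (μ : ℕ → Measure (EuclideanSpace ℝ (Fin d)))
    (μlim : Measure (EuclideanSpace ℝ (Fin d)))
    (hprob : ∀ k, IsProbabilityMeasure (μ k)) (hproblim : IsProbabilityMeasure μlim)
    (v : ℕ → EuclideanSpace ℝ (Fin d) → EuclideanSpace ℝ (Fin d))
    (w : EuclideanSpace ℝ (Fin d) → EuclideanSpace ℝ (Fin d))
    (hvInt : ∀ k, Integrable (v k) (μ k)) (hwInt : Integrable w μlim)
    (hnarrow : ∀ φ : EuclideanSpace ℝ (Fin d) → ℝ, Continuous φ →
      (∃ M : ℝ, ∀ x, |φ x| ≤ M) →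
      Tendsto (fun k => ∫ x, φ x ∂(μ k)) atTop (nhds (∫ x, φ x ∂μlim)))
    (hweak : ∀ φ : EuclideanSpace ℝ (Fin d) → EuclideanSpace ℝ (Fin d),
      Continuous φ → HasCompactSupport φ →
      Tendsto (fun k => ∫ x, (inner ℝ (φ x) (v k x) : ℝ) ∂(μ k)) atTop
        (nhds (∫ x, (inner ℝ (φ x) (w x) : ℝ) ∂μlim))) :
    ∫⁻ x, Ψ x (w x) ∂μlim ≤
      liminf (fun k => ∫⁻ x, Ψ x (v k x) ∂(μ k)) atTop := by
  classical
  -- measurable representative of w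
  set w' : EuclideanSpace ℝ (Fin d) → EuclideanSpace ℝ (Fin d) := hwInt.1.mk w with hw'def
  have hww' : w =ᵐ[μlim] w' := hwInt.1.ae_eq_mk
  have hw'sm : StronglyMeasurable w' := hwInt.1.stronglyMeasurable_mk
  have hw'meas : Measurable w' := hw'sm.measurable
  have hw'Int : Integrable w' μlim := hwInt.congr hww'
  -- bounds on a and b
  have hCa : ∀ h, ∃ C : ℝ, ∀ x, |a h x| ≤ C := by
    intro h
    have := ((hacont h).norm).bddAbove_range_of_hasCompactSupport (hasupp h).norm
    obtain ⟨C, hC⟩ := this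
    exact ⟨C, fun x => hC ⟨x, rfl⟩⟩
  have hCb : ∀ h, ∃ C : ℝ, ∀ x, ‖b h x‖ ≤ C := by
    intro h
    have := ((hbcont h).norm).bddAbove_range_of_hasCompactSupport (hbsupp h).norm
    obtain ⟨C, hC⟩ := this
    exact ⟨C, fun x => hC ⟨x, rfl⟩⟩
  choose Ca hCa using hCa
  choose Cb hCb using hCb
  set C : ℕ → ℝ := fun h => max (Ca h) (Cb h) with hCdef
  have hCnonneg : ∀ h, 0 ≤ C h := fun h =>
    le_trans (le_trans (abs_nonneg _) (hCa h 0)) (le_max_left _ _)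
  have hCa' : ∀ h x, |a h x| ≤ C h := fun h x => (hCa h x).trans (le_max_left _ _)
  have hCb' : ∀ h x, ‖b h x‖ ≤ C h := fun h x => (hCb h x).trans (le_max_right _ _)
  -- the weight function
  set ρ : EuclideanSpace ℝ (Fin d) → ℝ := fun x => 1 + ‖w' x‖ with hρdef
  have hρnonneg : ∀ x, 0 ≤ ρ x := fun x => by positivity
  have hρmeas : Measurable ρ := measurable_const.add hw'meas.norm
  have hρInt : Integrable ρ μlim := (integrable_const 1).add hw'Int.norm
  -- the affine functions
  set ℓ : ℕ → EuclideanSpace ℝ (Fin d) → ℝ := fun h x => a h x + (inner ℝ (w' x) (b h x) : ℝ) with hℓdef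
  have hℓmeas : ∀ h, Measurable (ℓ h) :=
    fun h => ((hacont h).measurable).add (hw'meas.inner (hbcont h).measurable)
  have hℓbound : ∀ h x, |ℓ h x| ≤ C h * ρ x := by
    intro h x
    have h1 : |(inner ℝ (w' x) (b h x) : ℝ)| ≤ ‖w' x‖ * ‖b h x‖ := abs_real_inner_le_norm _ _
    have h2 : ‖w' x‖ * ‖b h x‖ ≤ ‖w' x‖ * C h :=
      mul_le_mul_of_nonneg_left (hCb' h x) (norm_nonneg _)
    have h3 := hCa' h x
    calc |ℓ h x| ≤ |a h x| + |(inner ℝ (w' x) (b h x) : ℝ)| := abs_add_le _ _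
      _ ≤ C h + ‖w' x‖ * C h := by linarith
      _ = C h * ρ x := by rw [hρdef]; ring
  have hℓInt : ∀ h, Integrable (ℓ h) μlim := by
    intro h
    refine Integrable.mono' (hρInt.const_mul (C h)) (hℓmeas h).aestronglyMeasurable
      (ae_of_all _ fun x => ?_)
    simpa [Real.norm_eq_abs] using hℓbound h x
  -- the running maxima
  set M : ℕ → EuclideanSpace ℝ (Fin d) → ℝ := fun n =>
    Nat.rec (fun _ => (0:ℝ)) (fun n Mn x => max (Mn x) (ℓ n x)) n with hMdef
  have hM0 : ∀ x, M 0 x = 0 := fun _ => rfl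
  have hMsucc : ∀ n x, M (n+1) x = max (M n x) (ℓ n x) := fun _ _ => rfl
  have hMnonneg : ∀ n x, 0 ≤ M n x := by
    intro n
    induction n with
    | zero => intro x; exact le_of_eq (hM0 x).symm
    | succ n ih => intro x; rw [hMsucc]; exact le_max_of_le_left (ih x)
  have hMmeas : ∀ n, Measurable (M n) := by
    intro n
    induction n with
    | zero => exact measurable_const
    | succ n ih =>
      have : M (n+1) = fun x => max (M n x) (ℓ n x) := funext fun x => hMsucc n x
      rw [this]; exact ih.max (hℓmeas n)
  have hMInt : ∀ n, Integrable (M n) μlim := by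
    intro n
    induction n with
    | zero => exact integrable_const 0
    | succ n ih =>
      have : M (n+1) = fun x => max (M n x) (ℓ n x) := funext fun x => hMsucc n x
      rw [this]
      exact ih.sup (hℓInt n)
  have hℓleM : ∀ n h, h < n → ∀ x, ℓ h x ≤ M n x := by
    intro n
    induction n with
    | zero => intro h hh; omega
    | succ n ih =>
      intro h hh x
      rw [hMsucc]
      rcases Nat.lt_succ_iff_lt_or_eq.mp hh with h' | h'
      · exact le_max_of_le_left (ih h h' x)
      · subst h'; exact le_max_right _ _
  have hMmonole : ∀ i j, i ≤ j → ∀ x, M i x ≤ M j x := by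
    intro i j hij x
    exact monotone_nat_of_le_succ (f := fun n => M n x)
      (fun n => le_max_left _ _) hij
  -- Ψ bounds
  have hofReal_le : ∀ h x u, ENNReal.ofReal (a h x + (inner ℝ u (b h x) : ℝ)) ≤ Ψ x u := by
    intro h x u
    rw [hΨ]
    exact le_iSup (fun h => ENNReal.ofReal (a h x + (inner ℝ u (b h x) : ℝ))) h
  have hΨpt : ∀ (n : ℕ) (c : ℕ → ℝ) (x u : EuclideanSpace ℝ (Fin d)), (∀ h, 0 ≤ c h) →
      (∑ h ∈ Finset.range n, c h) ≤ 1 →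
      ENNReal.ofReal (∑ h ∈ Finset.range n, c h * (a h x + (inner ℝ u (b h x) : ℝ)))
        ≤ Ψ x u := by
    intro n c x u hc0 hc1
    rcases eq_top_or_lt_top (Ψ x u) with htop | hfin
    · rw [htop]; exact le_top
    · have hle : ∀ h, a h x + (inner ℝ u (b h x) : ℝ) ≤ (Ψ x u).toReal := by
        intro h
        rcases le_or_gt (a h x + (inner ℝ u (b h x) : ℝ)) 0 with h0 | h0
        · exact h0.trans ENNReal.toReal_nonneg
        · exact (ENNReal.ofReal_le_iff_le_toReal hfin.ne).mp (hofReal_le h x u)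
      have : (∑ h ∈ Finset.range n, c h * (a h x + (inner ℝ u (b h x) : ℝ)))
          ≤ (Ψ x u).toReal := by
        calc (∑ h ∈ Finset.range n, c h * (a h x + (inner ℝ u (b h x) : ℝ)))
            ≤ ∑ h ∈ Finset.range n, c h * (Ψ x u).toReal :=
              Finset.sum_le_sum fun h _ => mul_le_mul_of_nonneg_left (hle h) (hc0 h)
          _ = (∑ h ∈ Finset.range n, c h) * (Ψ x u).toReal := by rw [Finset.sum_mul]
          _ ≤ 1 * (Ψ x u).toReal :=
              mul_le_mul_of_nonneg_right hc1 ENNReal.toReal_nonneg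
          _ = (Ψ x u).toReal := one_mul _
      calc ENNReal.ofReal (∑ h ∈ Finset.range n, c h * (a h x + (inner ℝ u (b h x) : ℝ)))
          ≤ ENNReal.ofReal ((Ψ x u).toReal) := ENNReal.ofReal_le_ofReal this
        _ = Ψ x u := ENNReal.ofReal_toReal hfin.ne
  set L := liminf (fun k => ∫⁻ x, Ψ x (v k x) ∂(μ k)) atTop with hLdef
  -- weighted measure
  set ν : Measure (EuclideanSpace ℝ (Fin d)) := μlim.withDensity (fun x => ENNReal.ofReal (ρ x)) with hνdef
  have hνap : ∀ S : Set (EuclideanSpace ℝ (Fin d)), MeasurableSet S → ν S = ENNReal.ofReal (∫ x in S, ρ x ∂μlim) := by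
    intro S hS
    rw [hνdef, withDensity_apply _ hS,
      ← ofReal_integral_eq_lintegral_ofReal (hρInt.restrict)
        (ae_of_all _ fun x => hρnonneg x)]
  haveI hνfin : IsFiniteMeasure ν := by
    constructor
    rw [hνap Set.univ MeasurableSet.univ]
    exact ENNReal.ofReal_lt_top
  have hνsmall : ∀ (S : Set (EuclideanSpace ℝ (Fin d))) (δ : ℝ), MeasurableSet S → ν S < ENNReal.ofReal δ →
      ∫ x in S, ρ x ∂μlim ≤ δ := by
    intro S δ hS hlt
    rw [hνap S hS] at hlt
    by_contra hcon
    push_neg at hcon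
    exact absurd (ENNReal.ofReal_le_ofReal hcon.le) (not_le.mpr hlt)
  -- MAIN STEP
  have main : ∀ (n : ℕ) (ε : ℝ), 0 < ε →
      ENNReal.ofReal (∫ x, M n x ∂μlim) ≤ L + ENNReal.ofReal ε := by
    intro n ε hε
    -- the level sets and the disjointified partition
    set S : ℕ → Set (EuclideanSpace ℝ (Fin d)) :=
      fun h => {x | 0 < ℓ h x ∧ M n x ≤ ℓ h x} with hSdef
    have hSmeas : ∀ h, MeasurableSet (S h) := fun h =>
      (measurableSet_lt measurable_const (hℓmeas h)).inter
        (measurableSet_le (hMmeas n) (hℓmeas h))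
    set A : ℕ → Set (EuclideanSpace ℝ (Fin d)) :=
      fun h => S h \ ⋃ j ∈ Finset.range h, S j with hAdef
    have hAmeas : ∀ h, MeasurableSet (A h) := fun h =>
      (hSmeas h).diff ((Finset.range h).measurableSet_biUnion (fun j _ => hSmeas j))
    have hmemA : ∀ h x, x ∈ A h ↔ (x ∈ S h ∧ ∀ j < h, x ∉ S j) := by
      intro h x
      simp only [hAdef, Set.mem_diff, Set.mem_iUnion, Finset.mem_range, not_exists]
    have hAdisj : ∀ j h, j < h → ∀ x, x ∈ A j → x ∉ A h := by
      intro j h hjh x hxj hxh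
      exact ((hmemA h x).mp hxh).2 j hjh ((hmemA j x).mp hxj).1
    have hexists : ∀ (m : ℕ) (x : EuclideanSpace ℝ (Fin d)), 0 < M m x →
        ∃ h, h < m ∧ 0 < ℓ h x ∧ M m x ≤ ℓ h x := by
      intro m
      induction m with
      | zero => intro x hx; rw [hM0] at hx; exact absurd hx (lt_irrefl 0)
      | succ m ih =>
        intro x hx
        rcases le_or_gt (ℓ m x) (M m x) with hc | hc
        · have hmax : M (m+1) x = M m x := by rw [hMsucc]; exact max_eq_left hc
          rw [hmax] at hx ⊢
          obtain ⟨h, hh, h1, h2⟩ := ih x hx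
          exact ⟨h, Nat.lt_succ_of_lt hh, h1, h2⟩
        · have hmax : M (m+1) x = ℓ m x := by rw [hMsucc]; exact max_eq_right hc.le
          rw [hmax] at hx ⊢
          exact ⟨m, Nat.lt_succ_self m, hx, le_refl _⟩
    have hMrepr : ∀ x, M n x = ∑ h ∈ Finset.range n, (A h).indicator (ℓ h) x := by
      intro x
      rcases (hMnonneg n x).lt_or_eq with hpos | hzero
      · obtain ⟨h1, hh1, hp1, hp2⟩ := hexists n x hpos
        have hS1 : x ∈ S h1 := ⟨hp1, hp2⟩
        have hexS : ∃ h, x ∈ S h := ⟨h1, hS1⟩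
        have hh0S : x ∈ S (Nat.find hexS) := Nat.find_spec hexS
        have hh0min : ∀ j, j < Nat.find hexS → x ∉ S j := fun j hj => Nat.find_min hexS hj
        have hh0n : Nat.find hexS < n := lt_of_le_of_lt (Nat.find_min' hexS hS1) hh1
        have hxA : x ∈ A (Nat.find hexS) := (hmemA _ x).mpr ⟨hh0S, hh0min⟩
        have hval : ℓ (Nat.find hexS) x = M n x :=
          le_antisymm (hℓleM n _ hh0n x) hh0S.2
        rw [Finset.sum_eq_single_of_mem (Nat.find hexS) (Finset.mem_range.mpr hh0n)]
        · rw [Set.indicator_of_mem hxA, hval]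
        · intro j hj hne
          refine Set.indicator_of_notMem (fun hxAj => ?_) _
          rcases lt_or_gt_of_ne hne with hlt | hgt
          · exact hh0min j hlt ((hmemA j x).mp hxAj).1
          · exact ((hmemA j x).mp hxAj).2 _ hgt hh0S
      · rw [← hzero]
        symm
        refine Finset.sum_eq_zero fun j hj => ?_
        refine Set.indicator_of_notMem (fun hxA => ?_) _
        have h1 : 0 < ℓ j x := ((hmemA j x).mp hxA).1.1
        have h2 : ℓ j x ≤ M n x := hℓleM n j (Finset.mem_range.mp hj) x
        rw [← hzero] at h2; linarith
    -- choice of δ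
    set Csum : ℝ := ∑ h ∈ Finset.range n, C h with hCsumdef
    have hCsum0 : 0 ≤ Csum := Finset.sum_nonneg fun h _ => hCnonneg h
    set δ : ℝ := ε / ((n+1) * (Csum + 1)) with hδdef
    have hδpos : 0 < δ := div_pos hε (by positivity)
    -- compact inner and open outer approximations
    have hKUex : ∀ h, ∃ K U_ : Set (EuclideanSpace ℝ (Fin d)), K ⊆ A h ∧ IsCompact K ∧
        IsOpen U_ ∧ K ⊆ U_ ∧ ν (A h \ K) < ENNReal.ofReal δ ∧ ν (U_ \ K) < ENNReal.ofReal δ := by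
      intro h
      obtain ⟨K, hKA, hKc, hKd⟩ := (hAmeas h).exists_isCompact_diff_lt (measure_ne_top ν _)
        (ENNReal.ofReal_pos.mpr hδpos).ne'
      obtain ⟨U_, hKU_, hUo, -, hUd⟩ := hKc.measurableSet.exists_isOpen_diff_lt
        (measure_ne_top ν _) (ENNReal.ofReal_pos.mpr hδpos).ne'
      exact ⟨K, U_, hKA, hKc, hUo, hKU_, hKd, hUd⟩
    choose K U hKA hKcomp hUopen hKsubU hνAK hνUK using hKUex
    -- Urysohn functions
    have hχex : ∀ h, ∃ χ : C(EuclideanSpace ℝ (Fin d), ℝ), Set.EqOn χ 1 (K h) ∧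
        Set.EqOn χ 0 (U h)ᶜ ∧ HasCompactSupport χ ∧ ∀ x, χ x ∈ Set.Icc (0:ℝ) 1 :=
      fun h => exists_continuous_one_zero_of_isCompact (hKcomp h) (hUopen h).isClosed_compl
        (Set.disjoint_left.mpr fun x hxK hxU => hxU (hKsubU h hxK))
    choose χ hχK hχU hχsupp hχIcc using hχex
    have hχ0 : ∀ h x, 0 ≤ χ h x := fun h x => (hχIcc h x).1
    have hχ1 : ∀ h x, χ h x ≤ 1 := fun h x => (hχIcc h x).2
    have hχnotU : ∀ h x, x ∉ U h → χ h x = 0 := fun h x hx => hχU h hx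
    have hχonK : ∀ h x, x ∈ K h → χ h x = 1 := fun h x hx => hχK h hx
    -- continuous partition of unity pieces
    set χ' : ℕ → EuclideanSpace ℝ (Fin d) → ℝ :=
      fun h x => χ h x * ∏ j ∈ Finset.range h, (1 - χ j x) with hχ'def
    have hχ'cont : ∀ h, Continuous (χ' h) := fun h =>
      (χ h).continuous.mul (continuous_finset_prod _ fun j _ =>
        continuous_const.sub (χ j).continuous)
    have hχ'supp : ∀ h, HasCompactSupport (χ' h) := by
      intro h
      exact (hχsupp h).mul_right
    have hχ'0 : ∀ h x, 0 ≤ χ' h x := fun h x =>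
      mul_nonneg (hχ0 h x) (Finset.prod_nonneg fun j _ => by linarith [hχ1 j x])
    have hχ'leχ : ∀ h x, χ' h x ≤ χ h x := fun h x =>
      mul_le_of_le_one_right (hχ0 h x)
        (Finset.prod_le_one (fun j _ => by linarith [hχ1 j x])
          (fun j _ => by linarith [hχ0 j x]))
    have hχ'le1 : ∀ h x, χ' h x ≤ 1 := fun h x => (hχ'leχ h x).trans (hχ1 h x)
    have hχ'sumle : ∀ x, ∑ h ∈ Finset.range n, χ' h x ≤ 1 := by
      intro x
      have hs : ∑ h ∈ Finset.range n, χ' h x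
          = 1 - ∏ j ∈ Finset.range n, (1 - χ j x) := aux_sum_mul_prod (fun j => χ j x) n
      have hp : 0 ≤ ∏ j ∈ Finset.range n, (1 - χ j x) :=
        Finset.prod_nonneg fun j _ => by linarith [hχ1 j x]
      linarith [hs, hp]
    -- test functions
    set Afun : EuclideanSpace ℝ (Fin d) → ℝ :=
      fun x => ∑ h ∈ Finset.range n, χ' h x * a h x with hAfundef
    set Bfun : EuclideanSpace ℝ (Fin d) → EuclideanSpace ℝ (Fin d) :=
      fun x => ∑ h ∈ Finset.range n, χ' h x • b h x with hBfundef
    have hAcont : Continuous Afun :=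
      continuous_finset_sum _ fun h _ => (hχ'cont h).mul (hacont h)
    have hBcont : Continuous Bfun :=
      continuous_finset_sum _ fun h _ => (hχ'cont h).smul (hbcont h)
    have hBsupp : HasCompactSupport Bfun :=
      aux_hcs_sum _ _ fun h _ => (hχ'supp h).smul_right
    have hAbound : ∀ x, |Afun x| ≤ Csum := by
      intro x
      calc |Afun x| ≤ ∑ h ∈ Finset.range n, |χ' h x * a h x| :=
            Finset.abs_sum_le_sum_abs _ _
        _ ≤ ∑ h ∈ Finset.range n, C h := by
            refine Finset.sum_le_sum fun h _ => ?_
            rw [abs_mul]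
            calc |χ' h x| * |a h x| ≤ 1 * C h := by
                  refine mul_le_mul ?_ (hCa' h x) (abs_nonneg _) zero_le_one
                  rw [abs_of_nonneg (hχ'0 h x)]; exact hχ'le1 h x
              _ = C h := one_mul _
        _ = Csum := rfl
    have hBbound : ∀ x, ‖Bfun x‖ ≤ Csum := by
      intro x
      calc ‖Bfun x‖ ≤ ∑ h ∈ Finset.range n, ‖χ' h x • b h x‖ := norm_sum_le _ _
        _ ≤ ∑ h ∈ Finset.range n, C h := by
            refine Finset.sum_le_sum fun h _ => ?_
            rw [norm_smul, Real.norm_eq_abs]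
            calc |χ' h x| * ‖b h x‖ ≤ 1 * C h := by
                  refine mul_le_mul ?_ (hCb' h x) (norm_nonneg _) zero_le_one
                  rw [abs_of_nonneg (hχ'0 h x)]; exact hχ'le1 h x
              _ = C h := one_mul _
        _ = Csum := rfl
    -- integrability of the test parts
    have hint1 : ∀ (m : Measure (EuclideanSpace ℝ (Fin d))) [IsFiniteMeasure m],
        Integrable Afun m := by
      intro m _
      refine Integrable.mono' (integrable_const Csum) hAcont.aestronglyMeasurable
        (ae_of_all _ fun x => ?_)
      simpa [Real.norm_eq_abs] using hAbound x
    have hint2 : ∀ (m : Measure (EuclideanSpace ℝ (Fin d)))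
        (u : EuclideanSpace ℝ (Fin d) → EuclideanSpace ℝ (Fin d)), Integrable u m →
        Integrable (fun x => (inner ℝ (Bfun x) (u x) : ℝ)) m := by
      intro m u hu
      refine Integrable.mono' (hu.norm.const_mul Csum)
        (AEStronglyMeasurable.inner hBcont.aestronglyMeasurable hu.1)
        (ae_of_all _ fun x => ?_)
      calc ‖(inner ℝ (Bfun x) (u x) : ℝ)‖ ≤ ‖Bfun x‖ * ‖u x‖ := norm_inner_le_norm _ _
        _ ≤ Csum * ‖u x‖ := mul_le_mul_of_nonneg_right (hBbound x) (norm_nonneg _)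
    -- algebraic decomposition
    have hdecomp : ∀ (u x : EuclideanSpace ℝ (Fin d)),
        ∑ h ∈ Finset.range n, χ' h x * (a h x + (inner ℝ u (b h x) : ℝ))
          = Afun x + (inner ℝ (Bfun x) u : ℝ) := by
      intro u x
      rw [hAfundef, hBfundef]
      rw [sum_inner]
      rw [← Finset.sum_add_distrib]
      refine Finset.sum_congr rfl fun h _ => ?_
      rw [real_inner_smul_left, mul_add, real_inner_comm]
    -- per-k lower bound
    have hΨk : ∀ k, ENNReal.ofReal (∫ x, (Afun x + (inner ℝ (Bfun x) (v k x) : ℝ)) ∂(μ k))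
        ≤ ∫⁻ x, Ψ x (v k x) ∂(μ k) := by
      intro k
      haveI := hprob k
      have hFint : Integrable (fun x => Afun x + (inner ℝ (Bfun x) (v k x) : ℝ)) (μ k) :=
        (hint1 _).add (hint2 _ _ (hvInt k))
      have hpt : ∀ x, ENNReal.ofReal (Afun x + (inner ℝ (Bfun x) (v k x) : ℝ))
          ≤ Ψ x (v k x) := by
        intro x
        rw [← hdecomp (v k x) x]
        exact hΨpt n (fun h => χ' h x) x (v k x) (fun h => hχ'0 h x) (hχ'sumle x)
      calc ENNReal.ofReal (∫ x, (Afun x + (inner ℝ (Bfun x) (v k x) : ℝ)) ∂(μ k))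
          ≤ ENNReal.ofReal (∫ x, max (Afun x + (inner ℝ (Bfun x) (v k x) : ℝ)) 0 ∂(μ k)) :=
            ENNReal.ofReal_le_ofReal
              (integral_mono hFint hFint.pos_part (fun x => le_max_left _ _))
        _ = ∫⁻ x, ENNReal.ofReal (max (Afun x + (inner ℝ (Bfun x) (v k x) : ℝ)) 0) ∂(μ k) :=
            ofReal_integral_eq_lintegral_ofReal hFint.pos_part
              (ae_of_all _ fun x => le_max_right _ _)
        _ = ∫⁻ x, ENNReal.ofReal (Afun x + (inner ℝ (Bfun x) (v k x) : ℝ)) ∂(μ k) := by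
            refine lintegral_congr fun x => ?_
            rcases le_total (Afun x + (inner ℝ (Bfun x) (v k x) : ℝ)) 0 with hc | hc
            · rw [max_eq_right hc, ENNReal.ofReal_of_nonpos hc]
              simp
            · rw [max_eq_left hc]
        _ ≤ ∫⁻ x, Ψ x (v k x) ∂(μ k) := lintegral_mono hpt
    -- convergence of the test integrals
    have htA := hnarrow Afun hAcont ⟨Csum, hAbound⟩
    have htB := hweak Bfun hBcont hBsupp
    have hconv : Tendsto (fun k => ∫ x, (Afun x + (inner ℝ (Bfun x) (v k x) : ℝ)) ∂(μ k)) atTop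
        (nhds ((∫ x, Afun x ∂μlim) + ∫ x, (inner ℝ (Bfun x) (w x) : ℝ) ∂μlim)) := by
      refine Tendsto.congr (fun k => ?_) (htA.add htB)
      haveI := hprob k
      exact (integral_add (hint1 _) (hint2 _ _ (hvInt k))).symm
    have hLlb : ENNReal.ofReal ((∫ x, Afun x ∂μlim)
        + ∫ x, (inner ℝ (Bfun x) (w x) : ℝ) ∂μlim) ≤ L := by
      have h4 := (ENNReal.continuous_ofReal.tendsto _).comp hconv
      rw [hLdef, ← h4.liminf_eq]
      exact liminf_le_liminf (Eventually.of_forall hΨk)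
    -- the limit value is ∫ T
    set T : EuclideanSpace ℝ (Fin d) → ℝ :=
      fun x => ∑ h ∈ Finset.range n, χ' h x * ℓ h x with hTdef
    have hTlim : (∫ x, Afun x ∂μlim) + ∫ x, (inner ℝ (Bfun x) (w x) : ℝ) ∂μlim
        = ∫ x, T x ∂μlim := by
      have e1 : ∫ x, (inner ℝ (Bfun x) (w x) : ℝ) ∂μlim
          = ∫ x, (inner ℝ (Bfun x) (w' x) : ℝ) ∂μlim :=
        integral_congr_ae (hww'.mono fun x hx => by
          show (inner ℝ (Bfun x) (w x) : ℝ) = (inner ℝ (Bfun x) (w' x) : ℝ); rw [hx])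
      rw [e1, ← integral_add (hint1 _) (hint2 _ _ hw'Int)]
      refine integral_congr_ae (ae_of_all _ fun x => ?_)
      show Afun x + (inner ℝ (Bfun x) (w' x) : ℝ) = T x
      rw [hTdef]
      exact (hdecomp (w' x) x).symm
    -- integrability of T
    have hTint : Integrable T μlim := by
      rw [hTdef]
      refine integrable_finset_sum _ fun h _ => ?_
      refine Integrable.bdd_mul (c := 1) (hℓInt h) (hχ'cont h).aestronglyMeasurable (ae_of_all _ fun x => ?_)
      rw [Real.norm_eq_abs, abs_of_nonneg (hχ'0 h x)]
      exact hχ'le1 h x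
    -- the error function
    have msAK : ∀ h, MeasurableSet (A h \ K h) :=
      fun h => (hAmeas h).diff (hKcomp h).measurableSet
    have msUK : ∀ j, MeasurableSet (U j \ K j) :=
      fun j => (hUopen j).measurableSet.diff (hKcomp j).measurableSet
    set E : EuclideanSpace ℝ (Fin d) → ℝ := fun x =>
      ∑ h ∈ Finset.range n, C h * ((A h \ K h).indicator ρ x
        + ∑ j ∈ Finset.range n, (U j \ K j).indicator ρ x) with hEdef
    have hindnn : ∀ (s : Set (EuclideanSpace ℝ (Fin d))) x,
        0 ≤ s.indicator (fun _ => (1:ℝ)) x :=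
      fun s x => Set.indicator_nonneg (fun _ _ => zero_le_one) x
    have hindρ : ∀ (s : Set (EuclideanSpace ℝ (Fin d))) x,
        s.indicator (fun _ => (1:ℝ)) x * ρ x = s.indicator ρ x := by
      intro s x
      by_cases hx : x ∈ s <;> simp [hx]
    -- the key pointwise estimate for the cut-offs
    have hkey : ∀ h, h < n → ∀ x, |χ' h x - (A h).indicator (fun _ => (1:ℝ)) x|
        ≤ (A h \ K h).indicator (fun _ => (1:ℝ)) x
          + ∑ j ∈ Finset.range n, (U j \ K j).indicator (fun _ => (1:ℝ)) x := by
      intro h hn x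
      have hsumnn : 0 ≤ ∑ j ∈ Finset.range n, (U j \ K j).indicator (fun _ => (1:ℝ)) x :=
        Finset.sum_nonneg fun j _ => hindnn _ x
      by_cases hxA : x ∈ A h
      · rw [Set.indicator_of_mem hxA]
        by_cases hxK : x ∈ K h
        · have hχbound : ∀ j, j ≠ h → χ j x ≤ (U j \ K j).indicator (fun _ => (1:ℝ)) x := by
            intro j hj
            by_cases hxU : x ∈ U j
            · have hxKj : x ∉ K j := by
                intro hxKj
                rcases lt_or_gt_of_ne hj with hlt | hgt
                · exact hAdisj j h hlt x (hKA j hxKj) hxA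
                · exact hAdisj h j hgt x hxA (hKA j hxKj)
              rw [Set.indicator_of_mem (show x ∈ U j \ K j from ⟨hxU, hxKj⟩)]
              exact hχ1 j x
            · rw [hχnotU j x hxU]
              exact hindnn _ x
          have hv : χ' h x = ∏ j ∈ Finset.range h, (1 - χ j x) := by
            rw [hχ'def]
            simp only
            rw [hχonK h x hxK, one_mul]
          have h1 : 1 - χ' h x ≤ ∑ j ∈ Finset.range h, χ j x := by
            rw [hv]
            linarith [aux_one_sub_sum_le_prod (Finset.range h) (fun j => χ j x)
              (fun j => hχ0 j x) (fun j => hχ1 j x)]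
          have h2 : ∑ j ∈ Finset.range h, χ j x
              ≤ ∑ j ∈ Finset.range n, (U j \ K j).indicator (fun _ => (1:ℝ)) x := by
            calc ∑ j ∈ Finset.range h, χ j x
                ≤ ∑ j ∈ Finset.range h, (U j \ K j).indicator (fun _ => (1:ℝ)) x :=
                  Finset.sum_le_sum fun j hj =>
                    hχbound j (Nat.ne_of_lt (Finset.mem_range.mp hj))
              _ ≤ ∑ j ∈ Finset.range n, (U j \ K j).indicator (fun _ => (1:ℝ)) x :=
                  Finset.sum_le_sum_of_subset_of_nonneg
                    (Finset.range_subset_range.mpr hn.le) (fun j _ _ => hindnn _ x)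
          have habs : |χ' h x - 1| = 1 - χ' h x := by
            rw [abs_sub_comm, abs_of_nonneg (by linarith [hχ'le1 h x])]
          rw [habs]
          linarith [hindnn (A h \ K h) x]
        · have hi : (A h \ K h).indicator (fun _ => (1:ℝ)) x = 1 :=
            Set.indicator_of_mem (show x ∈ A h \ K h from ⟨hxA, hxK⟩) _
          have habs : |χ' h x - 1| ≤ 1 := by
            rw [abs_sub_comm, abs_of_nonneg (by linarith [hχ'le1 h x])]
            linarith [hχ'0 h x]
          rw [hi]
          linarith
      · rw [Set.indicator_of_notMem hxA, sub_zero, abs_of_nonneg (hχ'0 h x)]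
        have h3 : χ' h x ≤ (U h \ K h).indicator (fun _ => (1:ℝ)) x := by
          by_cases hxU : x ∈ U h
          · have hxK : x ∉ K h := fun hc => hxA (hKA h hc)
            rw [Set.indicator_of_mem (show x ∈ U h \ K h from ⟨hxU, hxK⟩)]
            exact hχ'le1 h x
          · have hz : χ h x = 0 := hχnotU h x hxU
            have : χ' h x ≤ 0 := (hχ'leχ h x).trans_eq hz
            exact this.trans (hindnn _ x)
        have h4 : (U h \ K h).indicator (fun _ => (1:ℝ)) x
            ≤ ∑ j ∈ Finset.range n, (U j \ K j).indicator (fun _ => (1:ℝ)) x :=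
          Finset.single_le_sum (f := fun j => (U j \ K j).indicator (fun _ => (1:ℝ)) x)
            (fun j _ => hindnn _ x) (Finset.mem_range.mpr hn)
        linarith [hindnn (A h \ K h) x]
    -- pointwise domination of the error
    have hptwise : ∀ x, |T x - M n x| ≤ E x := by
      intro x
      rw [hMrepr x, hTdef, hEdef]
      simp only
      rw [← Finset.sum_sub_distrib]
      refine (Finset.abs_sum_le_sum_abs _ _).trans (Finset.sum_le_sum fun h hh => ?_)
      have hin : (A h).indicator (ℓ h) x = (A h).indicator (fun _ => (1:ℝ)) x * ℓ h x := by
        by_cases hx : x ∈ A h <;> simp [hx]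
      rw [hin, ← sub_mul, abs_mul]
      calc |χ' h x - (A h).indicator (fun _ => (1:ℝ)) x| * |ℓ h x|
          ≤ ((A h \ K h).indicator (fun _ => (1:ℝ)) x
              + ∑ j ∈ Finset.range n, (U j \ K j).indicator (fun _ => (1:ℝ)) x)
            * (C h * ρ x) := by
            refine mul_le_mul (hkey h (Finset.mem_range.mp hh) x) (hℓbound h x)
              (abs_nonneg _) ?_
            exact add_nonneg (hindnn _ x) (Finset.sum_nonneg fun j _ => hindnn _ x)
        _ = C h * ((A h \ K h).indicator ρ x
              + ∑ j ∈ Finset.range n, (U j \ K j).indicator ρ x) := by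
            rw [← hindρ (A h \ K h) x]
            have hrw : ∀ j, (U j \ K j).indicator ρ x
                = (U j \ K j).indicator (fun _ => (1:ℝ)) x * ρ x :=
              fun j => (hindρ _ x).symm
            simp_rw [hrw]
            rw [← Finset.sum_mul]
            ring
    -- integrability of E
    have hEint : Integrable E μlim := by
      rw [hEdef]
      refine integrable_finset_sum _ fun h _ => ?_
      refine Integrable.const_mul ?_ (C h)
      exact (hρInt.indicator (msAK h)).add
        (integrable_finset_sum _ fun j _ => hρInt.indicator (msUK j))
    -- value of ∫ E
    have hsetint : ∀ (s : Set (EuclideanSpace ℝ (Fin d))), MeasurableSet s →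
        ν s < ENNReal.ofReal δ → ∫ x, s.indicator ρ x ∂μlim ≤ δ := by
      intro s hs hlt
      rw [integral_indicator hs]
      exact hνsmall s δ hs hlt
    have hEval : ∫ x, E x ∂μlim ≤ ε := by
      have hterm : ∀ h, h ∈ Finset.range n →
          ∫ x, C h * ((A h \ K h).indicator ρ x
            + ∑ j ∈ Finset.range n, (U j \ K j).indicator ρ x) ∂μlim
          ≤ C h * ((n + 1) * δ) := by
        intro h _
        rw [integral_const_mul]
        refine mul_le_mul_of_nonneg_left ?_ (hCnonneg h)
        rw [integral_add (hρInt.indicator (msAK h))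
          (integrable_finset_sum _ fun j _ => hρInt.indicator (msUK j))]
        have h1 : ∫ x, (A h \ K h).indicator ρ x ∂μlim ≤ δ :=
          hsetint _ (msAK h) (hνAK h)
        have h2 : ∫ x, (∑ j ∈ Finset.range n, (U j \ K j).indicator ρ x) ∂μlim
            ≤ n * δ := by
          rw [integral_finset_sum _ fun j _ => hρInt.indicator (msUK j)]
          calc ∑ j ∈ Finset.range n, ∫ x, (U j \ K j).indicator ρ x ∂μlim
              ≤ ∑ j ∈ Finset.range n, δ :=
                Finset.sum_le_sum fun j _ => hsetint _ (msUK j) (hνUK j)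
            _ = n * δ := by rw [Finset.sum_const, Finset.card_range]; ring
        have hsplit : ((n:ℝ) + 1) * δ = (n:ℝ) * δ + δ := by ring
        linarith
      have hE0 : ∫ x, E x ∂μlim = ∑ h ∈ Finset.range n,
          ∫ x, C h * ((A h \ K h).indicator ρ x
            + ∑ j ∈ Finset.range n, (U j \ K j).indicator ρ x) ∂μlim := by
        rw [hEdef]
        exact integral_finset_sum _ fun h _ => Integrable.const_mul
          ((hρInt.indicator (msAK h)).add
            (integrable_finset_sum _ fun j _ => hρInt.indicator (msUK j))) (C h)
      have hE1 : ∫ x, E x ∂μlim ≤ ∑ h ∈ Finset.range n, C h * ((n + 1) * δ) := by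
        rw [hE0]
        exact Finset.sum_le_sum hterm
      have hE2 : ∑ h ∈ Finset.range n, C h * ((n + 1) * δ) = Csum * ((n + 1) * δ) := by
        rw [hCsumdef, Finset.sum_mul]
      have hE3 : Csum * ((n + 1) * δ) ≤ ε := by
        have hpos1 : (0:ℝ) < (n:ℝ) + 1 := by positivity
        have hpos2 : (0:ℝ) < Csum + 1 := by linarith
        have hkeyq : Csum * (((n:ℝ) + 1) * δ) = ε * (Csum / (Csum + 1)) := by
          rw [hδdef]
          field_simp
        have hq1 : Csum / (Csum + 1) ≤ 1 := by
          rw [div_le_one hpos2]; linarith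
        have hq0 : 0 ≤ Csum / (Csum + 1) := by positivity
        calc Csum * (((n:ℝ) + 1) * δ) = ε * (Csum / (Csum + 1)) := hkeyq
          _ ≤ ε * 1 := mul_le_mul_of_nonneg_left hq1 hε.le
          _ = ε := mul_one _
      linarith
    -- the error estimate for ∫ T
    have hTerr : ∫ x, M n x ∂μlim - ε ≤ ∫ x, T x ∂μlim := by
      have h6 : ∫ x, (M n x - T x) ∂μlim ≤ ∫ x, E x ∂μlim := by
        refine integral_mono ((hMInt n).sub hTint) hEint fun x => ?_
        calc M n x - T x ≤ |M n x - T x| := le_abs_self _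
          _ = |T x - M n x| := abs_sub_comm _ _
          _ ≤ E x := hptwise x
      rw [integral_sub (hMInt n) hTint] at h6
      linarith
    -- conclusion of the main step
    calc ENNReal.ofReal (∫ x, M n x ∂μlim)
        ≤ ENNReal.ofReal ((∫ x, T x ∂μlim) + ε) :=
          ENNReal.ofReal_le_ofReal (by linarith)
      _ ≤ ENNReal.ofReal (∫ x, T x ∂μlim) + ENNReal.ofReal ε := ENNReal.ofReal_add_le
      _ ≤ L + ENNReal.ofReal ε := by
          refine add_le_add_left ?_ _
          rw [← hTlim]
          exact hLlb
  -- conclude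
  have main2 : ∀ n, ∫⁻ x, ENNReal.ofReal (M n x) ∂μlim ≤ L := by
    intro n
    rw [← ofReal_integral_eq_lintegral_ofReal (hMInt n) (ae_of_all _ (hMnonneg n))]
    refine ENNReal.le_of_forall_pos_le_add fun ε hε _ => ?_
    have := main n ε hε
    rwa [ENNReal.ofReal_coe_nnreal] at this
  have hsuplow : ∀ m x, ENNReal.ofReal (M m x)
      ≤ ⨆ h : ℕ, ENNReal.ofReal (a h x + (inner ℝ (w' x) (b h x) : ℝ)) := by
    intro m
    induction m with
    | zero => intro x; rw [hM0 x]; simp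
    | succ m ih =>
      intro x
      rw [hMsucc]
      rcases le_total (M m x) (ℓ m x) with hc | hc
      · rw [max_eq_right hc]
        exact le_iSup (fun h => ENNReal.ofReal (a h x + (inner ℝ (w' x) (b h x) : ℝ))) m
      · rw [max_eq_left hc]; exact ih x
  calc ∫⁻ x, Ψ x (w x) ∂μlim = ∫⁻ x, Ψ x (w' x) ∂μlim :=
        lintegral_congr_ae (hww'.mono fun x hx => by show Ψ x (w x) = Ψ x (w' x); rw [hx])
    _ = ∫⁻ x, ⨆ m, ENNReal.ofReal (M m x) ∂μlim := by
        refine lintegral_congr fun x => ?_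
        rw [hΨ x (w' x)]
        apply le_antisymm
        · refine iSup_le fun h => le_iSup_of_le (h+1) ?_
          refine ENNReal.ofReal_le_ofReal ?_
          rw [hMsucc]
          exact le_max_right _ _
        · exact iSup_le fun m => hsuplow m x
    _ = ⨆ m, ∫⁻ x, ENNReal.ofReal (M m x) ∂μlim := by
        refine lintegral_iSup (fun m => ENNReal.measurable_ofReal.comp (hMmeas m)) ?_
        intro i j hij x
        exact ENNReal.ofReal_le_ofReal (hMmonole i j hij x)
    _ ≤ L := iSup_le main2
end
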